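/- For each i ∈ {1,2,3,4}, the single-qubit reduced density matrices of the EJM state ψ_i form a tetrahedral configuration of Bloch length √3/2: Tr₂ |ψ_i⟩⟨ψ_i| = (1/2)(I + (√3/2) m_i·σ) and Tr₁ |ψ_i⟩⟨ψ_i| = (1/2)(I − (√3/2) m_i·σ), where Tr₂ and Tr₁ denote the partial traces over the second and first qubit respectively. -/

import Mathlib

open Matrix Complex Kronecker

noncomputable section

def X2 : Matrix (Fin 2) (Fin 2) ℂ := !![0, 1; 1, 0]
def Y2 : Matrix (Fin 2) (Fin 2) ℂ := !![0, -Complex.I; Complex.I, 0]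
def Z2 : Matrix (Fin 2) (Fin 2) ℂ := !![1, 0; 0, -1]

/-- The tetrahedral Bloch vectors `m₁, m₂, m₃, m₄` (0-indexed). -/
def mtet : Fin 4 → Fin 3 → ℝ := fun i j =>
  (![![1, 1, 1], ![1, -1, -1], ![-1, 1, -1], ![-1, -1, 1]] : Fin 4 → Fin 3 → ℝ) i j /
    Real.sqrt 3

def bTheta (m : Fin 3 → ℝ) : ℝ := Real.arccos (m 2)
def bPhi (m : Fin 3 → ℝ) : ℝ := Complex.arg ((m 0 : ℂ) + (m 1 : ℂ) * Complex.I)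

/-- `|m⟩ = cos(θ/2)|0⟩ + sin(θ/2) e^{iφ} |1⟩`. -/
def ketP (m : Fin 3 → ℝ) : Fin 2 → ℂ :=
  ![(Real.cos (bTheta m / 2) : ℂ),
    (Real.sin (bTheta m / 2) : ℂ) * Complex.exp ((bPhi m : ℂ) * Complex.I)]

/-- `|−m⟩ = sin(θ/2)|0⟩ − cos(θ/2) e^{iφ} |1⟩`. -/
def ketM (m : Fin 3 → ℝ) : Fin 2 → ℂ :=
  ![(Real.sin (bTheta m / 2) : ℂ),
    -((Real.cos (bTheta m / 2) : ℂ)) * Complex.exp ((bPhi m : ℂ) * Complex.I)]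

/-- Tensor product of two qubit vectors. -/
def tp (u w : Fin 2 → ℂ) : Fin 2 × Fin 2 → ℂ := fun p => u p.1 * w p.2

/-- The EJM basis states `ψ_1, …, ψ_4` (0-indexed). -/
def ψEJM (i : Fin 4) : Fin 2 × Fin 2 → ℂ :=
  (((Real.sqrt 3 + 1) / (2 * Real.sqrt 2) : ℝ) : ℂ) • tp (ketP (mtet i)) (ketM (mtet i)) +
    (((Real.sqrt 3 - 1) / (2 * Real.sqrt 2) : ℝ) : ℂ) • tp (ketM (mtet i)) (ketP (mtet i))

/-- Inner product on `ℂ² ⊗ ℂ²` (conjugate-linear in the first argument). -/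
def ip2 (v w : Fin 2 × Fin 2 → ℂ) : ℂ := ∑ p, star (v p) * w p

/-- `m·σ = m_x X + m_y Y + m_z Z`. -/
def mDotSigma (m : Fin 3 → ℝ) : Matrix (Fin 2) (Fin 2) ℂ :=
  (m 0 : ℂ) • X2 + (m 1 : ℂ) • Y2 + (m 2 : ℂ) • Z2

end

noncomputable section

/-- Partial trace over the second qubit. -/
def ptr2 (ρ : Matrix (Fin 2 × Fin 2) (Fin 2 × Fin 2) ℂ) : Matrix (Fin 2) (Fin 2) ℂ :=
  fun a b => ∑ c : Fin 2, ρ (a, c) (b, c)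

/-- Partial trace over the first qubit. -/
def ptr1 (ρ : Matrix (Fin 2 × Fin 2) (Fin 2 × Fin 2) ℂ) : Matrix (Fin 2) (Fin 2) ℂ :=
  fun a b => ∑ c : Fin 2, ρ (c, a) (c, b)

/-- The projector `|ψ⟩⟨ψ|`. -/
def outer (ψ : Fin 2 × Fin 2 → ℂ) : Matrix (Fin 2 × Fin 2) (Fin 2 × Fin 2) ℂ :=
  Matrix.vecMulVec ψ (star ψ)

lemma ket_facts (m : Fin 3 → ℝ) (hm : m 0 ^ 2 + m 1 ^ 2 + m 2 ^ 2 = 1) :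
    ((Real.cos (bTheta m / 2) : ℂ)) ^ 2 = (1 + (m 2 : ℂ)) / 2 ∧
    ((Real.sin (bTheta m / 2) : ℂ)) ^ 2 = (1 - (m 2 : ℂ)) / 2 ∧
    (Real.cos (bTheta m / 2) : ℂ) * (Real.sin (bTheta m / 2) : ℂ) *
      Complex.exp ((bPhi m : ℂ) * Complex.I) = ((m 0 : ℂ) + (m 1 : ℂ) * Complex.I) / 2 := by
  have h1 : m 2 ≤ 1 := by nlinarith [sq_nonneg (m 0), sq_nonneg (m 1)]
  have h2 : -1 ≤ m 2 := by nlinarith [sq_nonneg (m 0), sq_nonneg (m 1)]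
  have hcos : Real.cos (bTheta m) = m 2 := Real.cos_arccos h2 h1
  have hc2 : Real.cos (bTheta m / 2) ^ 2 = (1 + m 2) / 2 := by
    rw [Real.cos_sq, show 2 * (bTheta m / 2) = bTheta m by ring, hcos]; ring
  have hs2 : Real.sin (bTheta m / 2) ^ 2 = (1 - m 2) / 2 := by
    have h := Real.sin_sq_add_cos_sq (bTheta m / 2); linarith
  refine ⟨?_, ?_, ?_⟩
  · rw [← Complex.ofReal_pow, hc2]
    simp only [Complex.ofReal_div, Complex.ofReal_add, Complex.ofReal_one, Complex.ofReal_ofNat]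
  · rw [← Complex.ofReal_pow, hs2]
    simp only [Complex.ofReal_div, Complex.ofReal_sub, Complex.ofReal_one, Complex.ofReal_ofNat]
  · set w : ℂ := (m 0 : ℂ) + (m 1 : ℂ) * Complex.I with hw
    have habs : (‖w‖ : ℝ) = Real.sin (bTheta m) := by
      rw [bTheta, Real.sin_arccos,
        show (1 : ℝ) - m 2 ^ 2 = m 0 ^ 2 + m 1 ^ 2 by linarith, hw,
        ← Complex.normSq_add_mul_I (m 0) (m 1), ← Complex.sq_norm,
        Real.sqrt_sq (norm_nonneg _)]
    have hcs : Real.cos (bTheta m / 2) * Real.sin (bTheta m / 2) = Real.sin (bTheta m) / 2 := by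
      have h := Real.sin_two_mul (bTheta m / 2)
      rw [show 2 * (bTheta m / 2) = bTheta m by ring] at h
      linarith
    have key := Complex.norm_mul_exp_arg_mul_I w
    have hphi : bPhi m = Complex.arg w := rfl
    rw [hphi, ← Complex.ofReal_mul, hcs, ← habs, Complex.ofReal_div, Complex.ofReal_ofNat]
    rw [div_mul_eq_mul_div, key]

lemma expE (m : Fin 3 → ℝ) :
    Complex.exp ((bPhi m : ℂ) * Complex.I) *
      (starRingEnd ℂ) (Complex.exp ((bPhi m : ℂ) * Complex.I)) = 1 := by
  rw [← Complex.exp_conj, _root_.map_mul, Complex.conj_I, Complex.conj_ofReal, ← Complex.exp_add]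
  simp

lemma conj_cs (m : Fin 3 → ℝ) (hm : m 0 ^ 2 + m 1 ^ 2 + m 2 ^ 2 = 1) :
    (Real.cos (bTheta m / 2) : ℂ) * (Real.sin (bTheta m / 2) : ℂ) *
      (starRingEnd ℂ) (Complex.exp ((bPhi m : ℂ) * Complex.I)) =
      ((m 0 : ℂ) - (m 1 : ℂ) * Complex.I) / 2 := by
  have h := congrArg (starRingEnd ℂ) (ket_facts m hm).2.2
  simp only [_root_.map_mul, map_div₀, _root_.map_add, Complex.conj_ofReal, Complex.conj_I,
    _root_.map_ofNat, mul_neg] at h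
  linear_combination h

lemma ketP_outer (m : Fin 3 → ℝ) (hm : m 0 ^ 2 + m 1 ^ 2 + m 2 ^ 2 = 1) :
    vecMulVec (ketP m) (star (ketP m)) =
      (1 / 2 : ℂ) • ((1 : Matrix (Fin 2) (Fin 2) ℂ) + mDotSigma m) := by
  obtain ⟨hc2, hs2, hcs⟩ := ket_facts m hm
  have hE := expE m
  have hcsb := conj_cs m hm
  ext a b
  fin_cases a <;> fin_cases b <;>
    simp [vecMulVec_apply, ketP, mDotSigma, X2, Y2, Z2, Matrix.one_apply, Matrix.add_apply,
      Matrix.smul_apply, smul_eq_mul, Complex.conj_ofReal, star_mul', Complex.star_def,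
      -Complex.ofReal_cos, -Complex.ofReal_sin]
  · linear_combination hc2
  · linear_combination hcsb
  · linear_combination hcs
  · linear_combination ((Real.sin (bTheta m / 2) : ℂ) * (Real.sin (bTheta m / 2) : ℂ)) * hE + hs2

lemma ketM_outer (m : Fin 3 → ℝ) (hm : m 0 ^ 2 + m 1 ^ 2 + m 2 ^ 2 = 1) :
    vecMulVec (ketM m) (star (ketM m)) =
      (1 / 2 : ℂ) • ((1 : Matrix (Fin 2) (Fin 2) ℂ) - mDotSigma m) := by
  obtain ⟨hc2, hs2, hcs⟩ := ket_facts m hm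
  have hE := expE m
  have hcsb := conj_cs m hm
  ext a b
  fin_cases a <;> fin_cases b <;>
    simp [vecMulVec_apply, ketM, mDotSigma, X2, Y2, Z2, Matrix.one_apply, Matrix.add_apply,
      Matrix.sub_apply, Matrix.smul_apply, smul_eq_mul, Complex.conj_ofReal, star_mul',
      Complex.star_def, -Complex.ofReal_cos, -Complex.ofReal_sin]
  · linear_combination hs2
  · linear_combination -hcsb
  · linear_combination -hcs
  · linear_combination ((Real.cos (bTheta m / 2) : ℂ) * (Real.cos (bTheta m / 2) : ℂ)) * hE + hc2

lemma ket_orth (m : Fin 3 → ℝ) (hm : m 0 ^ 2 + m 1 ^ 2 + m 2 ^ 2 = 1) :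
    (∑ c, ketP m c * star (ketP m c) = 1) ∧ (∑ c, ketM m c * star (ketM m c) = 1) ∧
    (∑ c, ketP m c * star (ketM m c) = 0) ∧ (∑ c, ketM m c * star (ketP m c) = 0) := by
  obtain ⟨hc2, hs2, hcs⟩ := ket_facts m hm
  have hE := expE m
  refine ⟨?_, ?_, ?_, ?_⟩ <;>
    simp [ketP, ketM, Fin.sum_univ_two, Complex.conj_ofReal, star_mul', Complex.star_def,
      -Complex.ofReal_cos, -Complex.ofReal_sin]
  · linear_combination ((Real.sin (bTheta m / 2) : ℂ) * (Real.sin (bTheta m / 2) : ℂ)) * hE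
      + hc2 + hs2
  · linear_combination ((Real.cos (bTheta m / 2) : ℂ) * (Real.cos (bTheta m / 2) : ℂ)) * hE
      + hc2 + hs2
  · linear_combination (-((Real.cos (bTheta m / 2) : ℂ) * (Real.sin (bTheta m / 2) : ℂ))) * hE
  · linear_combination (-((Real.cos (bTheta m / 2) : ℂ) * (Real.sin (bTheta m / 2) : ℂ))) * hE

lemma ptr2_outer_eq (α β : ℂ) (u v : Fin 2 → ℂ)
    (hu : ∑ c, u c * star (u c) = 1) (hv : ∑ c, v c * star (v c) = 1)
    (huv : ∑ c, u c * star (v c) = 0) (hvu : ∑ c, v c * star (u c) = 0) :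
    ptr2 (outer (α • tp u v + β • tp v u)) =
      (α * star α) • vecMulVec u (star u) + (β * star β) • vecMulVec v (star v) := by
  simp only [Fin.sum_univ_two] at hu hv huv hvu
  ext a b
  simp only [ptr2, outer, vecMulVec_apply, Pi.add_apply, Pi.smul_apply, tp, smul_eq_mul,
    Pi.star_apply, star_add, star_mul', Fin.sum_univ_two, Matrix.add_apply, Matrix.smul_apply]
  linear_combination (α * star α * u a * star (u b)) * hv +
    (α * star β * u a * star (v b)) * hvu + (β * star α * v a * star (u b)) * huv +
    (β * star β * v a * star (v b)) * hu

lemma ptr1_outer_eq (α β : ℂ) (u v : Fin 2 → ℂ)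
    (hu : ∑ c, u c * star (u c) = 1) (hv : ∑ c, v c * star (v c) = 1)
    (huv : ∑ c, u c * star (v c) = 0) (hvu : ∑ c, v c * star (u c) = 0) :
    ptr1 (outer (α • tp u v + β • tp v u)) =
      (α * star α) • vecMulVec v (star v) + (β * star β) • vecMulVec u (star u) := by
  simp only [Fin.sum_univ_two] at hu hv huv hvu
  ext a b
  simp only [ptr1, outer, vecMulVec_apply, Pi.add_apply, Pi.smul_apply, tp, smul_eq_mul,
    Pi.star_apply, star_add, star_mul', Fin.sum_univ_two, Matrix.add_apply, Matrix.smul_apply]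
  linear_combination (α * star α * v a * star (v b)) * hu +
    (α * star β * v a * star (u b)) * huv + (β * star α * u a * star (v b)) * hvu +
    (β * star β * u a * star (u b)) * hv

lemma key (m : Fin 3 → ℝ) (hm : m 0 ^ 2 + m 1 ^ 2 + m 2 ^ 2 = 1) :
    ptr2 (outer ((((Real.sqrt 3 + 1) / (2 * Real.sqrt 2) : ℝ) : ℂ) • tp (ketP m) (ketM m) +
        (((Real.sqrt 3 - 1) / (2 * Real.sqrt 2) : ℝ) : ℂ) • tp (ketM m) (ketP m))) =
      (1 / 2 : ℂ) • ((1 : Matrix (Fin 2) (Fin 2) ℂ) +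
        ((Real.sqrt 3 / 2 : ℝ) : ℂ) • mDotSigma m) ∧
    ptr1 (outer ((((Real.sqrt 3 + 1) / (2 * Real.sqrt 2) : ℝ) : ℂ) • tp (ketP m) (ketM m) +
        (((Real.sqrt 3 - 1) / (2 * Real.sqrt 2) : ℝ) : ℂ) • tp (ketM m) (ketP m))) =
      (1 / 2 : ℂ) • ((1 : Matrix (Fin 2) (Fin 2) ℂ) -
        ((Real.sqrt 3 / 2 : ℝ) : ℂ) • mDotSigma m) := by
  obtain ⟨hu, hv, huv, hvu⟩ := ket_orth m hm
  have h3 : Real.sqrt 3 ^ 2 = 3 := Real.sq_sqrt (by norm_num)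
  have h2 : Real.sqrt 2 ^ 2 = 2 := Real.sq_sqrt (by norm_num)
  have h2ne : Real.sqrt 2 ≠ 0 := by positivity
  set A : ℝ := (Real.sqrt 3 + 1) / (2 * Real.sqrt 2) with hA
  set B : ℝ := (Real.sqrt 3 - 1) / (2 * Real.sqrt 2) with hB
  have hA2 : A ^ 2 = (2 + Real.sqrt 3) / 4 := by
    rw [hA, div_pow]; rw [show (2 * Real.sqrt 2) ^ 2 = 8 by nlinarith]; nlinarith
  have hB2 : B ^ 2 = (2 - Real.sqrt 3) / 4 := by
    rw [hB, div_pow]; rw [show (2 * Real.sqrt 2) ^ 2 = 8 by nlinarith]; nlinarith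
  have hAC : ((A : ℝ) : ℂ) * star ((A : ℝ) : ℂ) = (((2 + Real.sqrt 3) / 4 : ℝ) : ℂ) := by
    rw [Complex.star_def, Complex.conj_ofReal, ← Complex.ofReal_mul, ← sq, hA2]
  have hBC : ((B : ℝ) : ℂ) * star ((B : ℝ) : ℂ) = (((2 - Real.sqrt 3) / 4 : ℝ) : ℂ) := by
    rw [Complex.star_def, Complex.conj_ofReal, ← Complex.ofReal_mul, ← sq, hB2]
  constructor
  · rw [ptr2_outer_eq _ _ _ _ hu hv huv hvu, ketP_outer m hm, ketM_outer m hm, hAC, hBC]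
    ext a b
    simp only [Matrix.add_apply, Matrix.smul_apply, Matrix.sub_apply, smul_eq_mul]
    have e3 : ((Real.sqrt 3 : ℝ) : ℂ) ^ 2 = 3 := by rw [← Complex.ofReal_pow, h3]; norm_num
    push_cast
    ring_nf
  · rw [ptr1_outer_eq _ _ _ _ hu hv huv hvu, ketP_outer m hm, ketM_outer m hm, hAC, hBC]
    ext a b
    simp only [Matrix.add_apply, Matrix.smul_apply, Matrix.sub_apply, smul_eq_mul]
    push_cast
    ring_nf

/-- The single-qubit marginals of the EJM states form a tetrahedral
configuration of Bloch length `√3/2`: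
`Tr₂|ψ_i⟩⟨ψ_i| = ½(I + (√3/2) mᵢ·σ)` and `Tr₁|ψ_i⟩⟨ψ_i| = ½(I − (√3/2) mᵢ·σ)`. -/
theorem EJM_marginals_tetrahedral :
    ∀ i : Fin 4,
      ptr2 (outer (ψEJM i)) =
        (1 / 2 : ℂ) • ((1 : Matrix (Fin 2) (Fin 2) ℂ) +
          ((Real.sqrt 3 / 2 : ℝ) : ℂ) • mDotSigma (mtet i)) ∧
      ptr1 (outer (ψEJM i)) =
        (1 / 2 : ℂ) • ((1 : Matrix (Fin 2) (Fin 2) ℂ) -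
          ((Real.sqrt 3 / 2 : ℝ) : ℂ) • mDotSigma (mtet i)) := by
  intro i
  have hm : mtet i 0 ^ 2 + mtet i 1 ^ 2 + mtet i 2 ^ 2 = 1 := by
    have h3 : Real.sqrt 3 ^ 2 = 3 := Real.sq_sqrt (by norm_num)
    have h3ne : Real.sqrt 3 ≠ 0 := by positivity
    fin_cases i <;> simp [mtet, Matrix.cons_val_succ, Matrix.vecHead, Matrix.vecTail] <;> field_simp <;> nlinarith [h3]
  exact key (mtet i) hm

end
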